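/- Let n, m, d ∈ ℕ satisfy n ≥ 6dm and d ≥ 7, and suppose n is odd. Let G be a bipartite graph with parts V₁ and V₂ such that |V₁|, |V₂| ≥ 3n/2, and suppose G is an (m,d)-bipartite-expander and m-bipartite-joined. Then for every s₁ ∈ V₁ and s₂ ∈ V₂, there exists a path in G from s₁ to s₂ of length n − 2 (that is, a path with n − 1 vertices). -/

import Mathlib

open scoped Classical

/-- The external neighbourhood of `S` in `G`: vertices outside `S` with a neighbour in `S`. -/
noncomputable def extNbhd {V : Type*} [Fintype V] (G : SimpleGraph V) (S : Finset V) :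
    Finset V :=
  Finset.univ.filter fun v => v ∉ S ∧ ∃ u ∈ S, G.Adj u v

/-- `G` is a bipartite graph with parts `V1`, `V2`: they partition the vertex set and every
edge goes between them. -/
def IsBipartiteIn {V : Type*} [Fintype V] (G : SimpleGraph V) (V1 V2 : Finset V) : Prop :=
  Disjoint V1 V2 ∧ V1 ∪ V2 = Finset.univ ∧
  ∀ u v, G.Adj u v → (u ∈ V1 ∧ v ∈ V2) ∨ (u ∈ V2 ∧ v ∈ V1)

/-- `G` (with parts `V1`,`V2`) is an `(m,d)`-bipartite-expander: every nonempty subset `S` of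
one of the parts with `|S| ≤ m` satisfies `|N(S)| ≥ d|S|`. -/
def IsBipExpander {V : Type*} [Fintype V] (G : SimpleGraph V) (V1 V2 : Finset V)
    (m d : ℝ) : Prop :=
  ∀ S : Finset V, (S ⊆ V1 ∨ S ⊆ V2) → S.Nonempty → (S.card : ℝ) ≤ m →
    d * S.card ≤ ((extNbhd G S).card : ℝ)

/-- `G` (with parts `V1`,`V2`) is `m`-bipartite-joined: any `A ⊆ V1` and `B ⊆ V2` of size `m`
each have an edge between them. -/
def IsBipJoined {V : Type*} (G : SimpleGraph V) (V1 V2 : Finset V) (m : ℕ) : Prop :=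
  ∀ A ⊆ V1, ∀ B ⊆ V2, A.card = m → B.card = m → ∃ a ∈ A, ∃ b ∈ B, G.Adj a b

set_option linter.unusedSectionVars false

section ConnectingPathAux
open Finset SimpleGraph

variable {V : Type*} [Fintype V] {G : SimpleGraph V} {V1 V2 : Finset V} {m d : ℕ}

lemma sum_two_pow (k : ℕ) : ∑ j ∈ Finset.range k, 2^j + 1 = 2^k := by
  induction k with
  | zero => simp
  | succ k ih => rw [Finset.sum_range_succ, pow_succ]; omega

lemma key1 {m p : ℕ} (hm : 1 ≤ m) (hp : m ≤ 2^p) (hpmin : ∀ j < p, 2^j < m) :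
    ∀ i ≤ p, min m (2^(i+1)) + 2 * (∑ j ∈ Finset.range (i+1), min m (2^j)) ≤ 7 * min m (2^i) := by
  intro i hi
  rcases lt_or_eq_of_le hi with hilt | hieq
  · have hsum : ∑ j ∈ Finset.range (i+1), min m (2^j) = ∑ j ∈ Finset.range (i+1), 2^j := by
      apply Finset.sum_congr rfl
      intro j hj
      exact min_eq_right (le_of_lt (hpmin j (lt_of_lt_of_le (Finset.mem_range.1 hj) hilt)))
    have hmin : min m (2^i) = 2^i := min_eq_right (le_of_lt (hpmin i hilt))
    have h1 : min m (2^(i+1)) ≤ 2^(i+1) := min_le_right _ _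
    have h2 := sum_two_pow (i+1)
    have h3 : (2:ℕ)^(i+1) = 2 * 2^i := by rw [pow_succ]; ring
    rw [hsum, hmin]
    omega
  · subst hieq
    have hsum : ∑ j ∈ Finset.range (i+1), min m (2^j)
        = (∑ j ∈ Finset.range i, 2^j) + m := by
      rw [Finset.sum_range_succ]
      congr 1
      · apply Finset.sum_congr rfl
        intro j hj
        exact min_eq_right (le_of_lt (hpmin j (Finset.mem_range.1 hj)))
      · exact min_eq_left hp
    have hminp : min m (2^i) = m := min_eq_left hp
    have hminp1 : min m (2^(i+1)) = m := min_eq_left (hp.trans (pow_le_pow_right₀ (by norm_num) (by omega)))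
    have h2 := sum_two_pow i
    rw [hsum, hminp, hminp1]
    rcases Nat.eq_zero_or_pos i with h0 | hpos
    · subst h0; simp at h2 ⊢; omega
    · have : 2^(i-1) < m := hpmin (i-1) (by omega)
      have h4 : (2:ℕ)^i = 2 * 2^(i-1) := by
        rw [← pow_succ']
        congr 1
        omega
      omega

lemma key2 {m p : ℕ} (hm : 1 ≤ m) (hp : m ≤ 2^p) (hpmin : ∀ j < p, 2^j < m) :
    ∑ j ∈ Finset.range (p+2), min m (2^j) ≤ 4 * m := by
  have hsum : ∑ j ∈ Finset.range (p+2), min m (2^j)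
      = (∑ j ∈ Finset.range p, 2^j) + m + m := by
    rw [Finset.sum_range_succ, Finset.sum_range_succ]
    congr 2
    · apply Finset.sum_congr rfl
      intro j hj
      exact min_eq_right (le_of_lt (hpmin j (Finset.mem_range.1 hj)))
    · exact min_eq_left hp
    · exact min_eq_left (hp.trans (pow_le_pow_right₀ (by norm_num) (by omega)))
  have h2 := sum_two_pow p
  rw [hsum]
  rcases Nat.eq_zero_or_pos p with h0 | hpos
  · subst h0; simp at h2 ⊢; omega
  · have : 2^(p-1) < m := hpmin (p-1) (by omega)
    have h4 : (2:ℕ)^p = 2 * 2^(p-1) := by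
      rw [← pow_succ']
      congr 1
      omega
    omega

lemma p_le_m {m p : ℕ} (hm : 1 ≤ m) (hp : m ≤ 2^p) (hpmin : ∀ j < p, 2^j < m) : p ≤ m := by
  rcases Nat.eq_zero_or_pos p with h0 | hpos
  · omega
  · have h1 : 2^(p-1) < m := hpmin (p-1) (by omega)
    have h2 : p - 1 < 2^(p-1) := (Nat.lt_two_pow_self (n := p-1))
    omega


/-- getVert is injective on indices `≤ length` for a path. -/
lemma path_getVert_inj {u v : V} (w : G.Walk u v) (hw : w.IsPath) :
    ∀ i j, i ≤ w.length → j ≤ w.length → w.getVert i = w.getVert j → i = j := by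
  induction w with
  | nil => intro i j hi hj _; simp only [SimpleGraph.Walk.length_nil, Nat.le_zero] at hi hj; omega
  | @cons a b c h q ih =>
    intro i j hi hj hij
    rw [SimpleGraph.Walk.cons_isPath_iff] at hw
    match i, j with
    | 0, 0 => rfl
    | 0, j+1 =>
      exfalso
      rw [SimpleGraph.Walk.getVert_zero, SimpleGraph.Walk.getVert_cons_succ] at hij
      exact hw.2 (SimpleGraph.Walk.mem_support_iff_exists_getVert.2
        ⟨j, hij.symm, by simpa [SimpleGraph.Walk.length_cons] using hj⟩)
    | i+1, 0 =>
      exfalso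
      rw [SimpleGraph.Walk.getVert_zero, SimpleGraph.Walk.getVert_cons_succ] at hij
      exact hw.2 (SimpleGraph.Walk.mem_support_iff_exists_getVert.2
        ⟨i, hij, by simpa [SimpleGraph.Walk.length_cons] using hi⟩)
    | i+1, j+1 =>
      rw [SimpleGraph.Walk.getVert_cons_succ, SimpleGraph.Walk.getVert_cons_succ] at hij
      have := ih hw.1 i j (by simpa [SimpleGraph.Walk.length_cons] using hi)
        (by simpa [SimpleGraph.Walk.length_cons] using hj) hij
      omega

/-- Initial segment of a walk. -/
lemma exists_take {u v : V} (w : G.Walk u v) (b : ℕ) (hb : b ≤ w.length) :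
    ∃ w' : G.Walk u (w.getVert b), w'.length = b ∧ (∀ x ∈ w'.support, x ∈ w.support) ∧
      (w.IsPath → w'.IsPath) := by
  induction w generalizing b with
  | nil =>
    have hb0 : b = 0 := by simpa using hb
    subst hb0
    refine ⟨SimpleGraph.Walk.nil.copy rfl (SimpleGraph.Walk.getVert_zero _).symm, ?_, ?_, ?_⟩ <;>
      simp
  | @cons a x c h q ih =>
    match b with
    | 0 =>
      refine ⟨SimpleGraph.Walk.nil.copy rfl (SimpleGraph.Walk.getVert_zero _).symm, ?_, ?_, ?_⟩ <;>
        simp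
    | b+1 =>
      obtain ⟨w'', hl, hs, hp⟩ := ih (b := b) (by simpa [SimpleGraph.Walk.length_cons] using hb)
      refine ⟨(SimpleGraph.Walk.cons h w'').copy rfl
        (SimpleGraph.Walk.getVert_cons_succ q h).symm, ?_, ?_, ?_⟩
      · simp [hl]
      · intro y hy
        simp only [SimpleGraph.Walk.support_copy, SimpleGraph.Walk.support_cons,
          List.mem_cons] at hy
        rcases hy with rfl | hy
        · simp
        · simp only [SimpleGraph.Walk.support_cons, List.mem_cons]; exact Or.inr (hs _ hy)
      · intro hpath
        rw [SimpleGraph.Walk.cons_isPath_iff] at hpath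
        rw [SimpleGraph.Walk.isPath_copy, SimpleGraph.Walk.cons_isPath_iff]
        exact ⟨hp hpath.1, fun hmem => hpath.2 (hs _ hmem)⟩

/-- Final segment of a walk. -/
lemma exists_drop {u v : V} (w : G.Walk u v) (a : ℕ) (ha : a ≤ w.length) :
    ∃ w' : G.Walk (w.getVert a) v, w'.length + a = w.length ∧
      (∀ k, w'.getVert k = w.getVert (a + k)) ∧
      (∀ x ∈ w'.support, x ∈ w.support) ∧ (w.IsPath → w'.IsPath) := by
  induction w generalizing a with
  | nil =>
    have ha0 : a = 0 := by simpa using ha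
    subst ha0
    refine ⟨SimpleGraph.Walk.nil.copy (SimpleGraph.Walk.getVert_zero _).symm rfl, by simp,
      ?_, by simp, by simp⟩
    intro k; simp
  | @cons a' x c h q ih =>
    match a with
    | 0 =>
      refine ⟨(SimpleGraph.Walk.cons h q).copy (SimpleGraph.Walk.getVert_zero _).symm rfl,
        by simp, ?_, by simp, by simp⟩
      intro k; simp
    | a+1 =>
      obtain ⟨w', hl, hgv, hs, hp⟩ := ih (a := a) (by simpa [SimpleGraph.Walk.length_cons] using ha)
      refine ⟨w'.copy (SimpleGraph.Walk.getVert_cons_succ q h).symm rfl, ?_, ?_, ?_, ?_⟩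
      · simp only [SimpleGraph.Walk.length_copy, SimpleGraph.Walk.length_cons]; omega
      · intro k
        rw [SimpleGraph.Walk.getVert_copy]
        rw [hgv k, show a + 1 + k = (a + k) + 1 from by omega,
          SimpleGraph.Walk.getVert_cons_succ]
      · intro y hy
        simp only [SimpleGraph.Walk.support_copy] at hy
        simp only [SimpleGraph.Walk.support_cons, List.mem_cons]
        exact Or.inr (hs _ hy)
      · intro hpath
        rw [SimpleGraph.Walk.isPath_copy]
        exact hp ((SimpleGraph.Walk.cons_isPath_iff h q).1 hpath).1

/-- Appending two paths overlapping only in the midpoint gives a path. -/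
lemma isPath_append_mid {a b c : V} {p : G.Walk a b} {q : G.Walk b c} (hp : p.IsPath)
    (hq : q.IsPath) (hpq : ∀ x ∈ p.support, x ∈ q.support → x = b) :
    (p.append q).IsPath := by
  rw [SimpleGraph.Walk.isPath_def, SimpleGraph.Walk.support_append]
  refine List.Nodup.append hp.support_nodup (hq.support_nodup.tail) ?_
  intro x hxp hxq
  have hxq' : x ∈ q.support := List.mem_of_mem_tail hxq
  have hxb : x = b := hpq x hxp hxq'
  rw [hxb] at hxq
  have hnd := hq.support_nodup
  rw [q.support_eq_cons] at hnd
  exact (List.nodup_cons.1 hnd).1 hxq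


lemma bip_or (hbip : IsBipartiteIn G V1 V2) (v : V) : v ∈ V1 ∨ v ∈ V2 := by
  have := hbip.2.1
  have hv : v ∈ V1 ∪ V2 := by rw [this]; exact mem_univ v
  exact mem_union.1 hv

lemma bip_not_both (hbip : IsBipartiteIn G V1 V2) {v : V} (h1 : v ∈ V1) (h2 : v ∈ V2) : False :=
  (Finset.disjoint_left.1 hbip.1 h1) h2

lemma bip_adj1 (hbip : IsBipartiteIn G V1 V2) {u v : V} (h : G.Adj u v) (hu : u ∈ V1) :
    v ∈ V2 := by
  rcases hbip.2.2 u v h with ⟨_, hv⟩ | ⟨hu2, _⟩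
  · exact hv
  · exact absurd hu2 (fun h2 => bip_not_both hbip hu h2)

lemma bip_adj2 (hbip : IsBipartiteIn G V1 V2) {u v : V} (h : G.Adj u v) (hu : u ∈ V2) :
    v ∈ V1 := by
  rcases hbip.2.2 u v h with ⟨hu1, _⟩ | ⟨_, hv⟩
  · exact absurd hu (fun h2 => bip_not_both hbip hu1 h2)
  · exact hv

lemma mem_extNbhd {S : Finset V} {v : V} :
    v ∈ extNbhd G S ↔ v ∉ S ∧ ∃ u ∈ S, G.Adj u v := by
  simp [extNbhd]

lemma extNbhd_sub_V2 (hbip : IsBipartiteIn G V1 V2) {S : Finset V} (hS : S ⊆ V1) :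
    extNbhd G S ⊆ V2 := by
  intro v hv
  obtain ⟨-, u, hu, hadj⟩ := mem_extNbhd.1 hv
  exact bip_adj1 hbip hadj (hS hu)

lemma extNbhd_sub_V1 (hbip : IsBipartiteIn G V1 V2) {S : Finset V} (hS : S ⊆ V2) :
    extNbhd G S ⊆ V1 := by
  intro v hv
  obtain ⟨-, u, hu, hadj⟩ := mem_extNbhd.1 hv
  exact bip_adj2 hbip hadj (hS hu)

lemma card_eq_side_sum (hbip : IsBipartiteIn G V1 V2) (s : Finset V) :
    (s ∩ V1).card + (s ∩ V2).card = s.card := by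
  rw [← card_union_of_disjoint (hbip.1.mono inter_subset_right inter_subset_right),
    ← inter_union_distrib_left, hbip.2.1, inter_univ]

lemma m_pos (hj : IsBipJoined G V1 V2 m) : 1 ≤ m := by
  rcases Nat.eq_zero_or_pos m with hm | hm
  · subst hm
    obtain ⟨a, ha, -⟩ := hj ∅ (empty_subset _) ∅ (empty_subset _) rfl rfl
    exact absurd ha (notMem_empty a)
  · exact hm

/-- Every `m`-subset of `V1` dominates all but fewer than `m` vertices of `V2`. -/
lemma dom_lemma (hj : IsBipJoined G V1 V2 m) {X : Finset V} (hX1 : X ⊆ V1)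
    (hXc : X.card = m) :
    (V2.filter (fun v => ∀ x ∈ X, ¬ G.Adj x v)).card < m := by
  by_contra hge
  push_neg at hge
  obtain ⟨B, hBsub, hBc⟩ := exists_subset_card_eq hge
  obtain ⟨a, ha, b, hb, hadj⟩ := hj X hX1 B (hBsub.trans (filter_subset _ _)) hXc hBc
  have := (mem_filter.1 (hBsub hb)).2
  exact this a ha hadj

lemma exp_nat {d : ℕ} (hexp : IsBipExpander G V1 V2 (m : ℝ) (d : ℝ)) (hd : 7 ≤ d)
    {S : Finset V} (hside : S ⊆ V1 ∨ S ⊆ V2) (hne : S.Nonempty) (hcard : S.card ≤ m) :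
    7 * S.card ≤ (extNbhd G S).card := by
  have h1 := hexp S hside hne (by exact_mod_cast hcard)
  have h2 : (7 : ℝ) * S.card ≤ (d : ℝ) * S.card := by
    apply mul_le_mul_of_nonneg_right _ (by positivity)
    exact_mod_cast hd
  have := h2.trans h1
  exact_mod_cast this

/-- Side-counting for paths in a bipartite graph. -/
lemma path_side_count_aux (hbip : IsBipartiteIn G V1 V2) :
    ∀ {u v : V} (w : G.Walk u v), w.IsPath →
    (u ∈ V1 → (w.support.toFinset ∩ V2).card ≤ (w.support.toFinset ∩ V1).card ∧
       (w.support.toFinset ∩ V1).card ≤ (w.support.toFinset ∩ V2).card + 1) ∧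
    (u ∈ V2 → (w.support.toFinset ∩ V1).card ≤ (w.support.toFinset ∩ V2).card ∧
       (w.support.toFinset ∩ V2).card ≤ (w.support.toFinset ∩ V1).card + 1) := by
  intro u v w
  induction w with
  | nil =>
    intro _
    constructor
    · intro hu
      simp [Walk.support_nil, singleton_inter_of_mem hu,
        singleton_inter_of_notMem (fun h2 => bip_not_both hbip hu h2)]
    · intro hu
      simp [Walk.support_nil, singleton_inter_of_mem hu,
        singleton_inter_of_notMem (fun h1 => bip_not_both hbip h1 hu)]
  | @cons a x c h q ih =>
    intro hw
    rw [Walk.cons_isPath_iff] at hw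
    have ihq := ih hw.1
    have hsupp : (Walk.cons h q).support.toFinset = insert a q.support.toFinset := by
      simp [Walk.support_cons]
    have hanot : a ∉ q.support.toFinset := by simpa using hw.2
    constructor
    · intro ha1
      have hx2 : x ∈ V2 := bip_adj1 hbip h ha1
      have ha2 : a ∉ V2 := fun h2 => bip_not_both hbip ha1 h2
      have e1 : (Walk.cons h q).support.toFinset ∩ V1 =
          insert a (q.support.toFinset ∩ V1) := by
        rw [hsupp, insert_inter_of_mem ha1]
      have e2 : (Walk.cons h q).support.toFinset ∩ V2 = q.support.toFinset ∩ V2 := by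
        rw [hsupp, insert_inter_of_notMem ha2]
      have hc1 : ((Walk.cons h q).support.toFinset ∩ V1).card =
          (q.support.toFinset ∩ V1).card + 1 := by
        rw [e1, card_insert_of_notMem (fun hmem => hanot (mem_of_mem_inter_left hmem))]
      obtain ⟨l1, l2⟩ := ihq.2 hx2
      constructor
      · rw [e2, hc1]; omega
      · rw [e2, hc1]; omega
    · intro ha2
      have hx1 : x ∈ V1 := bip_adj2 hbip h ha2
      have ha1 : a ∉ V1 := fun h1 => bip_not_both hbip h1 ha2
      have e1 : (Walk.cons h q).support.toFinset ∩ V2 =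
          insert a (q.support.toFinset ∩ V2) := by
        rw [hsupp, insert_inter_of_mem ha2]
      have e2 : (Walk.cons h q).support.toFinset ∩ V1 = q.support.toFinset ∩ V1 := by
        rw [hsupp, insert_inter_of_notMem ha1]
      have hc1 : ((Walk.cons h q).support.toFinset ∩ V2).card =
          (q.support.toFinset ∩ V2).card + 1 := by
        rw [e1, card_insert_of_notMem (fun hmem => hanot (mem_of_mem_inter_left hmem))]
      obtain ⟨l1, l2⟩ := ihq.1 hx1
      constructor
      · rw [e2, hc1]; omega
      · rw [e2, hc1]; omega

lemma path_side_count (hbip : IsBipartiteIn G V1 V2) {u v : V} (w : G.Walk u v)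
    (hw : w.IsPath) :
    (w.support.toFinset ∩ V1).card ≤ (w.support.toFinset ∩ V2).card + 1 ∧
    (w.support.toFinset ∩ V2).card ≤ (w.support.toFinset ∩ V1).card + 1 := by
  have := path_side_count_aux hbip w hw
  rcases bip_or hbip u with hu | hu
  · obtain ⟨l1, l2⟩ := this.1 hu; omega
  · obtain ⟨l1, l2⟩ := this.2 hu; omega


/-- The invariant for the pair of webs grown from `s₁` and `s₂`. -/
def WebProp (G : SimpleGraph V) (V1 V2 : Finset V) (m : ℕ) (s₁ s₂ : V)
    (A B : ℕ → Finset V) (k : ℕ) : Prop :=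
  A 0 = {s₁} ∧ B 0 = {s₂} ∧
  (∀ i, i ≤ k → (A i).card = min m (2^i) ∧ (B i).card = min m (2^i)) ∧
  (∀ i, i ≤ k → (A i ⊆ (if Even i then V1 else V2)) ∧ (B i ⊆ (if Even i then V2 else V1))) ∧
  (∀ i, i < k → (∀ v ∈ A (i+1), ∃ u ∈ A i, G.Adj u v) ∧
    (∀ v ∈ B (i+1), ∃ u ∈ B i, G.Adj u v)) ∧
  (∀ i, i ≤ k → ∀ j, j ≤ k →
    (i ≠ j → Disjoint (A i) (A j) ∧ Disjoint (B i) (B j)) ∧ Disjoint (A i) (B j))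

lemma web_exists (hbip : IsBipartiteIn G V1 V2)
    (hexp : IsBipExpander G V1 V2 (m : ℝ) (d : ℝ)) (hd : 7 ≤ d) (hm : 1 ≤ m)
    {s₁ s₂ : V} (hs₁ : s₁ ∈ V1) (hs₂ : s₂ ∈ V2)
    (p : ℕ) (hp : m ≤ 2^p) (hpmin : ∀ j < p, 2^j < m) :
    ∃ A B : ℕ → Finset V, WebProp G V1 V2 m s₁ s₂ A B (p+1) := by
  have hs12 : s₁ ≠ s₂ := fun h => bip_not_both hbip hs₁ (h ▸ hs₂)
  suffices h : ∀ k, k ≤ p + 1 → ∃ A B : ℕ → Finset V, WebProp G V1 V2 m s₁ s₂ A B k from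
    h (p+1) le_rfl
  intro k
  induction k with
  | zero =>
    intro _
    refine ⟨fun _ => {s₁}, fun _ => {s₂}, rfl, rfl, ?_, ?_, ?_, ?_⟩
    · intro i hi
      interval_cases i
      simp [hm]
    · intro i hi
      interval_cases i
      simp [hs₁, hs₂, singleton_subset_iff]
    · intro i hi; omega
    · intro i hi j hj
      interval_cases i
      interval_cases j
      exact ⟨fun h => absurd rfl h, by simpa using hs12⟩
  | succ k ih =>
    intro hk1
    have hkp : k ≤ p := by omega
    obtain ⟨A, B, hA0, hB0, hsizes, hsides, hchain, hdisj⟩ := ih (by omega)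
    -- facts about the top levels
    have hAcard : (A k).card = min m (2^k) := (hsizes k le_rfl).1
    have hBcard : (B k).card = min m (2^k) := (hsizes k le_rfl).2
    have hmin1 : 1 ≤ min m (2^k) := le_min hm (Nat.one_le_two_pow)
    have hminm : min m (2^k) ≤ m := min_le_left _ _
    have hAne : (A k).Nonempty := card_pos.1 (by omega)
    have hBne : (B k).Nonempty := card_pos.1 (by omega)
    have hAside : A k ⊆ V1 ∨ A k ⊆ V2 := by
      rcases (hsides k le_rfl).1 with h
      by_cases he : Even k
      · left; simpa [he] using h
      · right; simpa [he] using h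
    have hBside : B k ⊆ V1 ∨ B k ⊆ V2 := by
      rcases (hsides k le_rfl).2 with h
      by_cases he : Even k
      · right; simpa [he] using h
      · left; simpa [he] using h
    set Forb : Finset V :=
      (Finset.range (k+1)).biUnion A ∪ (Finset.range (k+1)).biUnion B with hForb
    have hForbcard : Forb.card ≤ 2 * ∑ j ∈ Finset.range (k+1), min m (2^j) := by
      have h1 : ((Finset.range (k+1)).biUnion A).card ≤ ∑ j ∈ Finset.range (k+1), min m (2^j) := by
        refine (Finset.card_biUnion_le).trans ?_
        apply Finset.sum_le_sum
        intro j hj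
        exact le_of_eq (hsizes j (by simp at hj; omega)).1
      have h2 : ((Finset.range (k+1)).biUnion B).card ≤ ∑ j ∈ Finset.range (k+1), min m (2^j) := by
        refine (Finset.card_biUnion_le).trans ?_
        apply Finset.sum_le_sum
        intro j hj
        exact le_of_eq (hsizes j (by simp at hj; omega)).2
      calc Forb.card ≤ _ + _ := Finset.card_union_le _ _
        _ ≤ _ := by omega
    have hkey := key1 hm hp hpmin k hkp
    -- new level for A
    have hAexp : 7 * (A k).card ≤ (extNbhd G (A k)).card := exp_nat hexp hd hAside hAne (by omega)
    have hAavail : min m (2^(k+1)) ≤ ((extNbhd G (A k)) \ Forb).card := by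
      have := Finset.le_card_sdiff Forb (extNbhd G (A k))
      rw [hAcard] at hAexp
      omega
    obtain ⟨NA, hNAsub, hNAcard⟩ := exists_subset_card_eq hAavail
    have hBexp : 7 * (B k).card ≤ (extNbhd G (B k)).card := exp_nat hexp hd hBside hBne (by omega)
    have hBavail : min m (2^(k+1)) ≤ ((extNbhd G (B k)) \ Forb).card := by
      have := Finset.le_card_sdiff Forb (extNbhd G (B k))
      rw [hBcard] at hBexp
      omega
    obtain ⟨NB, hNBsub, hNBcard⟩ := exists_subset_card_eq hBavail
    -- sides of the new levels
    have hNAside : NA ⊆ (if Even (k+1) then V1 else V2) := by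
      intro v hv
      have hv' : v ∈ extNbhd G (A k) := (mem_sdiff.1 (hNAsub hv)).1
      by_cases he : Even k
      · have : ¬ Even (k+1) := by simp [Nat.even_add_one, he]
        simp only [this, if_false]
        exact extNbhd_sub_V2 hbip (by simpa [he] using (hsides k le_rfl).1) hv'
      · have : Even (k+1) := by simp [Nat.even_add_one, he]
        simp only [this, if_true]
        exact extNbhd_sub_V1 hbip (by simpa [he] using (hsides k le_rfl).1) hv'
    have hNBside : NB ⊆ (if Even (k+1) then V2 else V1) := by
      intro v hv
      have hv' : v ∈ extNbhd G (B k) := (mem_sdiff.1 (hNBsub hv)).1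
      by_cases he : Even k
      · have : ¬ Even (k+1) := by simp [Nat.even_add_one, he]
        simp only [this, if_false]
        exact extNbhd_sub_V1 hbip (by simpa [he] using (hsides k le_rfl).2) hv'
      · have : Even (k+1) := by simp [Nat.even_add_one, he]
        simp only [this, if_true]
        exact extNbhd_sub_V2 hbip (by simpa [he] using (hsides k le_rfl).2) hv'
    -- new levels avoid all old levels
    have hNAavoid : ∀ j, j ≤ k → Disjoint NA (A j) ∧ Disjoint NA (B j) := by
      intro j hj
      constructor <;>
      · rw [Finset.disjoint_left]
        intro v hv hvj
        have : v ∉ Forb := (mem_sdiff.1 (hNAsub hv)).2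
        apply this
        simp only [hForb, Finset.mem_union, Finset.mem_biUnion]
        first
          | exact Or.inl ⟨j, Finset.mem_range.2 (by omega), hvj⟩
          | exact Or.inr ⟨j, Finset.mem_range.2 (by omega), hvj⟩
    have hNBavoid : ∀ j, j ≤ k → Disjoint NB (A j) ∧ Disjoint NB (B j) := by
      intro j hj
      constructor <;>
      · rw [Finset.disjoint_left]
        intro v hv hvj
        have : v ∉ Forb := (mem_sdiff.1 (hNBsub hv)).2
        apply this
        simp only [hForb, Finset.mem_union, Finset.mem_biUnion]
        first
          | exact Or.inl ⟨j, Finset.mem_range.2 (by omega), hvj⟩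
          | exact Or.inr ⟨j, Finset.mem_range.2 (by omega), hvj⟩
    have hNANB : Disjoint NA NB := by
      by_cases he : Even (k+1)
      · exact hbip.1.mono (by simpa [he] using hNAside) (by simpa [he] using hNBside)
      · exact (hbip.1.symm).mono (by simpa [he] using hNAside) (by simpa [he] using hNBside)
    refine ⟨fun i => if i = k+1 then NA else A i, fun i => if i = k+1 then NB else B i,
      ?_, ?_, ?_, ?_, ?_, ?_⟩
    · simp only [if_neg (by omega : (0:ℕ) ≠ k+1)]; exact hA0
    · simp only [if_neg (by omega : (0:ℕ) ≠ k+1)]; exact hB0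
    · intro i hi
      by_cases hik : i = k+1
      · subst hik; simp only [if_pos rfl]; exact ⟨hNAcard, hNBcard⟩
      · simp only [if_neg hik]; exact hsizes i (by omega)
    · intro i hi
      by_cases hik : i = k+1
      · subst hik; simp only [if_pos rfl]; exact ⟨hNAside, hNBside⟩
      · simp only [if_neg hik]; exact hsides i (by omega)
    · intro i hi
      by_cases hik : i + 1 = k + 1
      · have hik' : i = k := by omega
        subst hik'
        simp only [if_pos rfl, if_neg (by omega : i ≠ i+1)]
        constructor
        · intro v hv
          have hv' : v ∈ extNbhd G (A i) := (mem_sdiff.1 (hNAsub hv)).1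
          simp only [extNbhd, Finset.mem_filter] at hv'
          exact hv'.2.2
        · intro v hv
          have hv' : v ∈ extNbhd G (B i) := (mem_sdiff.1 (hNBsub hv)).1
          simp only [extNbhd, Finset.mem_filter] at hv'
          exact hv'.2.2
      · simp only [if_neg hik, if_neg (by omega : i ≠ k+1)]
        exact hchain i (by omega)
    · intro i hi j hj
      by_cases hik : i = k+1 <;> by_cases hjk : j = k+1
      · subst hik; subst hjk
        simp only [if_pos rfl]
        exact ⟨fun h => absurd rfl h, hNANB⟩
      · subst hik
        simp only [if_pos rfl, if_neg hjk]
        exact ⟨fun _ => ⟨(hNAavoid j (by omega)).1, (hNBavoid j (by omega)).2⟩,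
          (hNAavoid j (by omega)).2⟩
      · subst hjk
        simp only [if_pos rfl, if_neg hik]
        refine ⟨fun _ => ⟨((hNAavoid i (by omega)).1).symm, ((hNBavoid i (by omega)).2).symm⟩, ?_⟩
        exact ((hNBavoid i (by omega)).1).symm
      · simp only [if_neg hik, if_neg hjk]
        exact hdisj i (by omega) j (by omega)


lemma isPath_concat {a b c : V} {p : G.Walk a b} (hp : p.IsPath) (h : G.Adj b c)
    (hc : c ∉ p.support) : (p.concat h).IsPath := by
  rw [Walk.concat_eq_append]
  apply isPath_append_mid hp
  · rw [Walk.cons_isPath_iff]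
    exact ⟨Walk.IsPath.nil, by simpa using h.ne⟩
  · intro v hv hvq
    simp only [Walk.support_cons, Walk.support_nil, List.mem_cons, List.mem_singleton] at hvq
    rcases hvq with rfl | rfl | hvq
    · rfl
    · exact absurd hv hc
    · exact absurd hvq List.not_mem_nil

/-- Branch extraction from a web. -/
lemma branch_exists {A : ℕ → Finset V} {s : V} (hA0 : A 0 = {s}) :
    ∀ t, (∀ i, i < t → ∀ v ∈ A (i+1), ∃ u ∈ A i, G.Adj u v) →
    (∀ i, i ≤ t → ∀ j, j ≤ t → i ≠ j → Disjoint (A i) (A j)) →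
    ∀ x ∈ A t, ∃ w : G.Walk s x, w.IsPath ∧ w.length = t ∧
      (∀ v ∈ w.support, ∃ j, j ≤ t ∧ v ∈ A j) := by
  intro t
  induction t with
  | zero =>
    intro _ _ x hx
    rw [hA0, mem_singleton] at hx
    subst hx
    refine ⟨Walk.nil, Walk.IsPath.nil, by simp, ?_⟩
    intro v hv
    simp only [Walk.support_nil, List.mem_singleton] at hv
    subst hv
    exact ⟨0, le_rfl, by simp [hA0]⟩
  | succ t ih =>
    intro hchain hdisj x hx
    obtain ⟨u, hu, hadj⟩ := hchain t (by omega) x hx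
    obtain ⟨w, hwp, hwl, hws⟩ := ih (fun i hi => hchain i (by omega))
      (fun i hi j hj => hdisj i (by omega) j (by omega)) u hu
    have hxnot : x ∉ w.support := by
      intro hmem
      obtain ⟨j, hj, hxj⟩ := hws x hmem
      have hd := hdisj (t+1) le_rfl j (by omega) (by omega)
      exact (Finset.disjoint_left.1 hd) hx hxj
    refine ⟨w.concat hadj, isPath_concat hwp hadj hxnot, ?_, ?_⟩
    · rw [Walk.length_concat, hwl]
    · intro v hv
      rw [Walk.support_concat, List.mem_append] at hv
      rcases hv with hv | hv
      · obtain ⟨j, hj, hvj⟩ := hws v hv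
        exact ⟨j, by omega, hvj⟩
      · simp only [List.mem_singleton] at hv
        subst hv
        exact ⟨t+1, le_rfl, hx⟩

lemma no_edge_bound_V2 (hj : IsBipJoined G V1 V2 m) {F U : Finset V}
    (hFU : ∀ x ∈ F, ∀ y ∈ U, ¬ G.Adj x y) (h1 : m ≤ (U ∩ V1).card) :
    (F ∩ V2).card < m := by
  by_contra hge
  push_neg at hge
  obtain ⟨A, hAsub, hAc⟩ := exists_subset_card_eq h1
  obtain ⟨B, hBsub, hBc⟩ := exists_subset_card_eq hge
  obtain ⟨a, ha, b, hb, hadj⟩ := hj A (hAsub.trans inter_subset_right) B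
    (hBsub.trans inter_subset_right) hAc hBc
  exact hFU b (mem_of_mem_inter_left (hBsub hb)) a (mem_of_mem_inter_left (hAsub ha)) hadj.symm

lemma no_edge_bound_V1 (hj : IsBipJoined G V1 V2 m) {F U : Finset V}
    (hFU : ∀ x ∈ F, ∀ y ∈ U, ¬ G.Adj x y) (h2 : m ≤ (U ∩ V2).card) :
    (F ∩ V1).card < m := by
  by_contra hge
  push_neg at hge
  obtain ⟨A, hAsub, hAc⟩ := exists_subset_card_eq hge
  obtain ⟨B, hBsub, hBc⟩ := exists_subset_card_eq h2
  obtain ⟨a, ha, b, hb, hadj⟩ := hj A (hAsub.trans inter_subset_right) B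
    (hBsub.trans inter_subset_right) hAc hBc
  exact hFU a (mem_of_mem_inter_left (hAsub ha)) b (mem_of_mem_inter_left (hBsub hb)) hadj

lemma part_card {F U S R W : Finset V} (h : F ∪ U ∪ S = R) (d1 : Disjoint F U)
    (d2 : Disjoint F S) (d3 : Disjoint U S) :
    (F ∩ W).card + (U ∩ W).card + (S ∩ W).card = (R ∩ W).card := by
  have he : (F ∪ U ∪ S) ∩ W = (F ∩ W ∪ U ∩ W) ∪ S ∩ W := by
    rw [union_inter_distrib_right, union_inter_distrib_right]
  rw [← h, he, card_union_of_disjoint, card_union_of_disjoint]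
  · exact d1.mono inter_subset_left inter_subset_left
  · rw [disjoint_union_left]
    exact ⟨d2.mono inter_subset_left inter_subset_left,
      d3.mono inter_subset_left inter_subset_left⟩

/-- The DFS lemma: a long path inside `R`. -/
lemma dfs_long_path (hbip : IsBipartiteIn G V1 V2) (hj : IsBipJoined G V1 V2 m)
    (hm : 1 ≤ m) {R : Finset V} {N : ℕ}
    (hN1 : N ≤ (R ∩ V1).card) (hN2 : N ≤ (R ∩ V2).card) (hNm : 2 * m + 1 ≤ N) :
    ∀ μ : ℕ, ∀ (F U : Finset V) (a r : V) (S : G.Walk a r),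
      2 * U.card + S.length ≤ μ →
      F ∪ U ∪ S.support.toFinset = R →
      Disjoint F U → Disjoint F S.support.toFinset → Disjoint U S.support.toFinset →
      S.IsPath →
      (∀ x ∈ F, ∀ y ∈ U, ¬ G.Adj x y) →
      (m ≤ (U ∩ V1).card ∨ m ≤ (U ∩ V2).card) →
      ∃ (x y : V) (Q : G.Walk x y), Q.IsPath ∧ (∀ v ∈ Q.support, v ∈ R) ∧
        2 * N ≤ Q.length + 1 + 4 * m := by
  intro μ
  induction μ with
  | zero =>
    intro F U a r S hμ _ _ _ _ _ _ hUside
    exfalso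
    have hU0 : U.card = 0 := by omega
    have h1 : (U ∩ V1).card = 0 := by
      have := card_le_card (Finset.inter_subset_left : U ∩ V1 ⊆ U); omega
    have h2 : (U ∩ V2).card = 0 := by
      have := card_le_card (Finset.inter_subset_left : U ∩ V2 ⊆ U); omega
    omega
  | succ μ ih =>
    intro F U a r S hμ hpart hFU hFS hUS hSpath hnoedge hUside
    by_cases hpush : ∃ u ∈ U, G.Adj u a
    · -- push
      obtain ⟨u, hu, hadj⟩ := hpush
      set S' : G.Walk u r := Walk.cons hadj S with hS'
      have huS : u ∉ S.support := by
        intro hmem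
        exact (Finset.disjoint_left.1 hUS) hu (List.mem_toFinset.2 hmem)
      have hS'path : S'.IsPath := (Walk.cons_isPath_iff hadj S).2 ⟨hSpath, huS⟩
      have hsupp' : S'.support.toFinset = insert u S.support.toFinset := by
        simp [hS', Walk.support_cons]
      have huF : u ∉ F := fun h => (Finset.disjoint_left.1 hFU) h hu
      have hpart' : F ∪ U.erase u ∪ S'.support.toFinset = R := by
        rw [hsupp', ← hpart]
        ext v
        simp only [mem_union, mem_erase, mem_insert]
        by_cases hvu : v = u
        · subst hvu; tauto
        · tauto
      have hdFU' : Disjoint F (U.erase u) := hFU.mono_right (erase_subset _ _)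
      have hdFS' : Disjoint F S'.support.toFinset := by
        rw [hsupp', disjoint_insert_right]
        exact ⟨huF, hFS⟩
      have hdUS' : Disjoint (U.erase u) S'.support.toFinset := by
        rw [hsupp', disjoint_insert_right]
        exact ⟨notMem_erase _ _, hUS.mono_left (erase_subset _ _)⟩
      have hnoedge' : ∀ x ∈ F, ∀ y ∈ U.erase u, ¬ G.Adj x y :=
        fun x hx y hy => hnoedge x hx y (mem_of_mem_erase hy)
      by_cases hside' : m ≤ ((U.erase u) ∩ V1).card ∨ m ≤ ((U.erase u) ∩ V2).card
      · have hucard : U.card = (U.erase u).card + 1 := by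
          rw [card_erase_of_mem hu]
          have : 1 ≤ U.card := card_pos.2 ⟨u, hu⟩
          omega
        exact ih F (U.erase u) u r S' (by simp [hS', Walk.length_cons]; omega) hpart'
          hdFU' hdFS' hdUS' hS'path hnoedge' hside'
      · -- harvest
        push_neg at hside'
        obtain ⟨hb1, hb2⟩ := hside'
        refine ⟨u, r, S', hS'path, ?_, ?_⟩
        · intro v hv
          have : v ∈ F ∪ U.erase u ∪ S'.support.toFinset :=
            mem_union_right _ (List.mem_toFinset.2 hv)
          rwa [hpart'] at this
        · have hcv1 := part_card (W := V1) hpart' hdFU' hdFS' hdUS'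
          have hcv2 := part_card (W := V2) hpart' hdFU' hdFS' hdUS'
          have halt := path_side_count hbip S' hS'path
          have hsum := card_eq_side_sum hbip S'.support.toFinset
          have hsuppcard : S'.support.toFinset.card = S.length + 2 := by
            rw [List.toFinset_card_of_nodup hS'path.support_nodup, Walk.length_support]
            simp [hS', Walk.length_cons]
          have hlen : S'.length = S.length + 1 := by simp [hS', Walk.length_cons]
          rcases hUside with hU1 | hU2
          · have hF2 := no_edge_bound_V2 hj hnoedge hU1
            omega
          · have hF1 := no_edge_bound_V1 hj hnoedge hU2
            omega
    · -- no push possible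
      push_neg at hpush
      cases S with
      | nil =>
        -- restart
        have hUne : U.Nonempty := by
          rcases hUside with h | h
          · have : 0 < (U ∩ V1).card := by omega
            obtain ⟨v, hv⟩ := card_pos.1 this
            exact ⟨v, mem_of_mem_inter_left hv⟩
          · have : 0 < (U ∩ V2).card := by omega
            obtain ⟨v, hv⟩ := card_pos.1 this
            exact ⟨v, mem_of_mem_inter_left hv⟩
        obtain ⟨u, hu⟩ := hUne
        have haU : a ∉ U := by
          intro h
          exact (Finset.disjoint_left.1 hUS) h
            (List.mem_toFinset.2 (by simp [Walk.support_nil]))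
        have haF : a ∉ F := by
          intro h
          exact (Finset.disjoint_left.1 hFS) h
            (List.mem_toFinset.2 (by simp [Walk.support_nil]))
        have huF : u ∉ F := fun h => (Finset.disjoint_left.1 hFU) h hu
        have hau : a ≠ u := fun h => haU (h ▸ hu)
        set F' := insert a F with hF'
        set S'' : G.Walk u u := Walk.nil with hS''
        have hpart'' : F' ∪ U.erase u ∪ S''.support.toFinset = R := by
          rw [← hpart]
          ext v
          simp only [hF', hS'', mem_union, mem_erase, mem_insert, Walk.support_nil,
            List.toFinset_cons, List.toFinset_nil, insert_empty_eq, mem_singleton]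
          by_cases hvu : v = u
          · subst hvu; tauto
          · by_cases hva : v = a
            · subst hva; tauto
            · tauto
        have hd1 : Disjoint F' (U.erase u) := by
          rw [hF', disjoint_insert_left]
          exact ⟨fun h => haU (mem_of_mem_erase h), hFU.mono_right (erase_subset _ _)⟩
        have hd2 : Disjoint F' S''.support.toFinset := by
          simp only [hS'', Walk.support_nil, List.toFinset_cons, List.toFinset_nil,
            insert_empty_eq, disjoint_singleton_right, hF', mem_insert]
          push_neg
          exact ⟨fun h => hau h.symm, huF⟩
        have hd3 : Disjoint (U.erase u) S''.support.toFinset := by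
          simp only [hS'', Walk.support_nil, List.toFinset_cons, List.toFinset_nil,
            insert_empty_eq, disjoint_singleton_right]
          exact notMem_erase _ _
        have hnoedge'' : ∀ x ∈ F', ∀ y ∈ U.erase u, ¬ G.Adj x y := by
          intro x hx y hy
          rcases mem_insert.1 hx with rfl | hx
          · exact fun hadj => hpush y (mem_of_mem_erase hy) hadj.symm
          · exact hnoedge x hx y (mem_of_mem_erase hy)
        have hucard : U.card = (U.erase u).card + 1 := by
          rw [card_erase_of_mem hu]
          have : 1 ≤ U.card := card_pos.2 ⟨u, hu⟩
          omega
        have hside'' : m ≤ ((U.erase u) ∩ V1).card ∨ m ≤ ((U.erase u) ∩ V2).card := by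
          have hcv1 := part_card (W := V1) hpart'' hd1 hd2 hd3
          have hcv2 := part_card (W := V2) hpart'' hd1 hd2 hd3
          have hS''1 : (S''.support.toFinset ∩ V1).card ≤ 1 := by
            apply le_trans (card_le_card (inter_subset_left))
            simp [hS'', Walk.support_nil]
          have hS''2 : (S''.support.toFinset ∩ V2).card ≤ 1 := by
            apply le_trans (card_le_card (inter_subset_left))
            simp [hS'', Walk.support_nil]
          rcases hUside with hU1 | hU2
          · have hF2 := no_edge_bound_V2 hj hnoedge hU1
            have hF'2 : (F' ∩ V2).card ≤ (F ∩ V2).card + 1 := by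
              have hsub : F' ∩ V2 ⊆ insert a (F ∩ V2) := by
                intro v hv
                rcases mem_inter.1 hv with ⟨hv1, hv2⟩
                rcases mem_insert.1 hv1 with rfl | hv1
                · exact mem_insert_self _ _
                · exact mem_insert_of_mem (mem_inter.2 ⟨hv1, hv2⟩)
              exact (card_le_card hsub).trans (card_insert_le _ _)
            right
            omega
          · have hF1 := no_edge_bound_V1 hj hnoedge hU2
            have hF'1 : (F' ∩ V1).card ≤ (F ∩ V1).card + 1 := by
              have hsub : F' ∩ V1 ⊆ insert a (F ∩ V1) := by
                intro v hv
                rcases mem_inter.1 hv with ⟨hv1, hv2⟩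
                rcases mem_insert.1 hv1 with rfl | hv1
                · exact mem_insert_self _ _
                · exact mem_insert_of_mem (mem_inter.2 ⟨hv1, hv2⟩)
              exact (card_le_card hsub).trans (card_insert_le _ _)
            left
            omega
        exact ih F' (U.erase u) u u S'' (by simp [hS'']; omega) hpart''
          hd1 hd2 hd3 (by simp [hS'']) hnoedge'' hside''
      | @cons _ b _ h S₂ =>
        -- pop
        have haS₂ : a ∉ S₂.support := ((Walk.cons_isPath_iff h S₂).1 hSpath).2
        have haU : a ∉ U := by
          intro hmem
          exact (Finset.disjoint_left.1 hUS) hmem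
            (List.mem_toFinset.2 (by simp [Walk.support_cons]))
        have haF : a ∉ F := by
          intro hmem
          exact (Finset.disjoint_left.1 hFS) hmem
            (List.mem_toFinset.2 (by simp [Walk.support_cons]))
        set F' := insert a F with hF'
        have hsupp₂ : (Walk.cons h S₂).support.toFinset = insert a S₂.support.toFinset := by
          simp [Walk.support_cons]
        have hpart₂ : F' ∪ U ∪ S₂.support.toFinset = R := by
          rw [hF', insert_union, insert_union]
          rw [hsupp₂, union_insert] at hpart
          exact hpart
        have hd1 : Disjoint F' U := by
          rw [hF', disjoint_insert_left]
          exact ⟨haU, hFU⟩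
        have hd2 : Disjoint F' S₂.support.toFinset := by
          rw [hF', disjoint_insert_left]
          constructor
          · simpa using haS₂
          · exact hFS.mono_right (by
              intro v hv
              simp only [Walk.support_cons, List.toFinset_cons, mem_insert]
              exact Or.inr hv)
        have hd3 : Disjoint U S₂.support.toFinset := hUS.mono_right (by
          intro v hv
          simp only [Walk.support_cons, List.toFinset_cons, mem_insert]
          exact Or.inr hv)
        have hnoedge₂ : ∀ x ∈ F', ∀ y ∈ U, ¬ G.Adj x y := by
          intro x hx y hy
          rcases mem_insert.1 hx with rfl | hx
          · exact fun hadj => hpush y hy hadj.symm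
          · exact hnoedge x hx y hy
        exact ih F' U b r S₂ (by simp only [Walk.length_cons] at hμ; omega) hpart₂
          hd1 hd2 hd3 ((Walk.cons_isPath_iff h S₂).1 hSpath).1 hnoedge₂ hUside


/-- even steps along a walk stay on the same side -/
lemma getVert_side_even (hbip : IsBipartiteIn G V1 V2) {x y : V} (Q : G.Walk x y) {a₀ : ℕ}
    (ha₀ : Q.getVert a₀ ∈ V2) :
    ∀ j, a₀ + 2*j ≤ Q.length → Q.getVert (a₀ + 2*j) ∈ V2 := by
  intro j
  induction j with
  | zero => intro _; simpa using ha₀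
  | succ j ih =>
    intro hle
    have h1 : a₀ + 2*j < Q.length := by omega
    have h2 : a₀ + 2*j + 1 < Q.length := by omega
    have hprev : Q.getVert (a₀ + 2*j) ∈ V2 := ih (by omega)
    have hadj1 := Q.adj_getVert_succ h1
    have hmid : Q.getVert (a₀ + 2*j + 1) ∈ V1 := bip_adj2 hbip hadj1 hprev
    have hadj2 := Q.adj_getVert_succ h2
    have : Q.getVert (a₀ + 2*j + 1 + 1) ∈ V2 := bip_adj1 hbip hadj2 hmid
    have he : a₀ + 2*(j+1) = a₀ + 2*j + 1 + 1 := by omega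
    rw [he]
    exact this



end ConnectingPathAux

/-- Connecting path. Let `n ≥ 6dm`, `d ≥ 7`, `n` odd, and let `G` be a
bipartite graph with parts `V₁, V₂` of size at least `3n/2` each which is an
`(m,d)`-bipartite-expander and `m`-bipartite-joined. Then any `s₁ ∈ V₁` and `s₂ ∈ V₂` are
joined by a path of length `n - 2`. -/
theorem connecting_path {V : Type*} [Fintype V] (G : SimpleGraph V) (V1 V2 : Finset V)
    (n m d : ℕ) (hn : 6 * d * m ≤ n) (hd : 7 ≤ d) (hodd : Odd n)
    (hbip : IsBipartiteIn G V1 V2)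
    (hV1 : 3 * (n : ℝ) / 2 ≤ V1.card) (hV2 : 3 * (n : ℝ) / 2 ≤ V2.card)
    (hexp : IsBipExpander G V1 V2 (m : ℝ) (d : ℝ)) (hj : IsBipJoined G V1 V2 m) :
    ∀ s₁ ∈ V1, ∀ s₂ ∈ V2, ∃ w : G.Walk s₁ s₂, w.IsPath ∧ w.length = n - 2 := by
  classical
  intro s₁ hs₁ s₂ hs₂
  open Finset SimpleGraph in
  have hm : 1 ≤ m := m_pos hj
  have hn42 : 42 * m ≤ n := le_trans (by nlinarith) hn
  have hV1' : 3 * n ≤ 2 * V1.card := by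
    have : ((3 * n : ℕ) : ℝ) ≤ ((2 * V1.card : ℕ) : ℝ) := by push_cast; linarith
    exact_mod_cast this
  have hV2' : 3 * n ≤ 2 * V2.card := by
    have : ((3 * n : ℕ) : ℝ) ≤ ((2 * V2.card : ℕ) : ℝ) := by push_cast; linarith
    exact_mod_cast this
  -- the scale p
  have hPex : ∃ k : ℕ, m ≤ 2^k := ⟨m, (Nat.lt_two_pow_self (n := m)).le⟩
  set p := Nat.find hPex with hpdef
  have hp : m ≤ 2^p := Nat.find_spec hPex
  have hpmin : ∀ j < p, 2^j < m := by
    intro j hjp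
    have := Nat.find_min hPex hjp
    omega
  have hpm : p ≤ m := p_le_m hm hp hpmin
  -- the webs
  obtain ⟨A, B, hA0, hB0, hsizes, hsides, hchain, hdisj⟩ :=
    web_exists hbip hexp hd hm hs₁ hs₂ p hp hpmin
  -- depths
  set t₁ := if Even p then p else p + 1 with ht₁def
  set t₂ := if Even p then p + 1 else p with ht₂def
  have hEt₁ : Even t₁ := by
    by_cases hEp : Even p
    · simpa [ht₁def, hEp] using hEp
    · simp only [ht₁def, if_neg hEp]
      exact Nat.even_add_one.2 hEp
  have hOt₂ : ¬ Even t₂ := by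
    by_cases hEp : Even p
    · simp only [ht₂def, if_pos hEp]
      rw [Nat.even_add_one]
      exact fun h => h hEp
    · simpa [ht₂def, hEp] using hEp
  have ht₁le : p ≤ t₁ ∧ t₁ ≤ p + 1 := by
    by_cases hEp : Even p <;> simp [ht₁def, hEp]
  have ht₂le : p ≤ t₂ ∧ t₂ ≤ p + 1 := by
    by_cases hEp : Even p <;> simp [ht₂def, hEp]
  -- the connecting sets
  set X := A t₁ with hXdef
  set Y := B t₂ with hYdef
  have hXcard : X.card = m := by
    rw [hXdef, (hsizes t₁ ht₁le.2).1]
    exact min_eq_left (hp.trans (Nat.pow_le_pow_right (by norm_num) ht₁le.1))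
  have hYcard : Y.card = m := by
    rw [hYdef, (hsizes t₂ ht₂le.2).2]
    exact min_eq_left (hp.trans (Nat.pow_le_pow_right (by norm_num) ht₂le.1))
  have hXV1 : X ⊆ V1 := by
    have := (hsides t₁ ht₁le.2).1
    simpa [hEt₁] using this
  have hYV1 : Y ⊆ V1 := by
    have := (hsides t₂ ht₂le.2).2
    simpa [hOt₂] using this
  -- the webs as sets
  set W1 := (Finset.range (p+2)).biUnion A with hW1def
  set W2 := (Finset.range (p+2)).biUnion B with hW2def
  have hW1card : W1.card ≤ 4 * m := by
    refine le_trans Finset.card_biUnion_le ?_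
    refine le_trans (Finset.sum_le_sum (fun j hj => le_of_eq
      (hsizes j (by simp only [Finset.mem_range] at hj; omega)).1)) ?_
    exact key2 hm hp hpmin
  have hW2card : W2.card ≤ 4 * m := by
    refine le_trans Finset.card_biUnion_le ?_
    refine le_trans (Finset.sum_le_sum (fun j hj => le_of_eq
      (hsizes j (by simp only [Finset.mem_range] at hj; omega)).2)) ?_
    exact key2 hm hp hpmin
  set Wb := W1 ∪ W2 with hWbdef
  have hWbcard : Wb.card ≤ 8 * m := le_trans (Finset.card_union_le _ _) (by omega)
  set R := Finset.univ \ Wb with hRdef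
  have hRV1 : 2 * V1.card ≤ 2 * (R ∩ V1).card + 16 * m := by
    have he : R ∩ V1 = V1 \ Wb := by
      rw [hRdef]; ext v; simp [Finset.mem_sdiff]; tauto
    have := Finset.le_card_sdiff Wb V1
    rw [he]
    omega
  have hRV2 : 2 * V2.card ≤ 2 * (R ∩ V2).card + 16 * m := by
    have he : R ∩ V2 = V2 \ Wb := by
      rw [hRdef]; ext v; simp [Finset.mem_sdiff]; tauto
    have := Finset.le_card_sdiff Wb V2
    rw [he]
    omega
  set N := min ((R ∩ V1).card) ((R ∩ V2).card) with hNdef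
  have hN1 : N ≤ (R ∩ V1).card := min_le_left _ _
  have hN2 : N ≤ (R ∩ V2).card := min_le_right _ _
  have h2N : 3 * n ≤ 2 * N + 16 * m := by
    rcases min_cases ((R ∩ V1).card) ((R ∩ V2).card) with ⟨h, _⟩ | ⟨h, _⟩ <;> omega
  have hNm : 2 * m + 1 ≤ N := by omega
  -- run the DFS
  have hRV1ne : ((R ∩ V1)).Nonempty := Finset.card_pos.1 (by omega)
  obtain ⟨u₀, hu₀⟩ := hRV1ne
  have hu₀R : u₀ ∈ R := Finset.mem_of_mem_inter_left hu₀
  have hT : (Walk.nil : G.Walk u₀ u₀).support.toFinset = {u₀} := by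
    simp [SimpleGraph.Walk.support_nil]
  have hpart₀ : (∅ : Finset V) ∪ R.erase u₀ ∪ (Walk.nil : G.Walk u₀ u₀).support.toFinset
      = R := by
    rw [hT, Finset.empty_union, Finset.union_comm, ← Finset.insert_eq]
    exact Finset.insert_erase hu₀R
  have hUV2 : m ≤ ((R.erase u₀) ∩ V2).card := by
    have hsub : R ∩ V2 ⊆ insert u₀ ((R.erase u₀) ∩ V2) := by
      intro v hv
      by_cases hvu : v = u₀
      · subst hvu; exact Finset.mem_insert_self _ _
      · exact Finset.mem_insert_of_mem (Finset.mem_inter.2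
          ⟨Finset.mem_erase.2 ⟨hvu, Finset.mem_of_mem_inter_left hv⟩,
           Finset.mem_of_mem_inter_right hv⟩)
    have := (Finset.card_le_card hsub).trans (Finset.card_insert_le _ _)
    omega
  obtain ⟨qx, qy, Q, hQpath, hQR, hQcard⟩ :=
    dfs_long_path hbip hj hm hN1 hN2 hNm (2 * (R.erase u₀).card)
      ∅ (R.erase u₀) u₀ u₀ Walk.nil (by simp) hpart₀
      (Finset.disjoint_empty_left _) (Finset.disjoint_empty_left _)
      (by rw [hT]; simp [Finset.notMem_erase])
      (by simp) (fun x hx => absurd hx (Finset.notMem_empty x))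
      (Or.inr hUV2)
  have hQbig : n + 4 * m ≤ Q.length := by omega
  -- starting parity position
  set a₀ := if Q.getVert 0 ∈ V2 then 0 else 1 with ha₀def
  have ha₀le : a₀ ≤ 1 := by rw [ha₀def]; split <;> omega
  have ha₀ : Q.getVert a₀ ∈ V2 := by
    by_cases h0 : Q.getVert 0 ∈ V2
    · rw [ha₀def, if_pos h0]; exact h0
    · rw [ha₀def, if_neg h0]
      have hx1 : Q.getVert 0 ∈ V1 := (bip_or hbip _).resolve_right h0
      exact bip_adj1 hbip (Q.adj_getVert_succ (by omega : 0 < Q.length)) hx1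
  -- the gap length D
  have htn : t₁ + t₂ + 4 ≤ n := by omega
  set D := n - (t₁ + t₂ + 4) with hDdef
  have hD : D + t₁ + t₂ + 4 = n := by omega
  have hDeven : ∃ e, D = 2 * e := by
    obtain ⟨nn, hnn⟩ := hodd
    obtain ⟨aa, haa⟩ := hEt₁
    have hbb : ∃ bb, t₂ = 2 * bb + 1 := by
      rcases Nat.even_or_odd t₂ with h | h
      · exact absurd h hOt₂
      · obtain ⟨bb, hbb⟩ := h; exact ⟨bb, hbb⟩
    obtain ⟨bb, hbb⟩ := hbb
    exact ⟨nn - aa - bb - 2, by omega⟩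
  obtain ⟨e, he⟩ := hDeven
  -- bad sets
  set BadX := V2.filter (fun v => ∀ x ∈ X, ¬ G.Adj x v) with hBadXdef
  set BadY := V2.filter (fun v => ∀ x ∈ Y, ¬ G.Adj x v) with hBadYdef
  have hBadX : BadX.card < m := dom_lemma hj hXV1 hXcard
  have hBadY : BadY.card < m := dom_lemma hj hYV1 hYcard
  -- slots
  set slots := Finset.range (2*m - 1) with hslotsdef
  have hposle : ∀ j ∈ slots, a₀ + 2*j + D ≤ Q.length := by
    intro j hj
    have : j ≤ 2*m - 2 := by
      simp only [hslotsdef, Finset.mem_range] at hj; omega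
    omega
  set J1 := slots.filter (fun j => Q.getVert (a₀ + 2*j) ∈ BadX) with hJ1def
  set J2 := slots.filter (fun j => Q.getVert (a₀ + 2*j + D) ∈ BadY) with hJ2def
  have hJ1card : J1.card ≤ BadX.card := by
    apply Finset.card_le_card_of_injOn (fun j => Q.getVert (a₀ + 2*j))
    · intro j hj
      exact (Finset.mem_filter.1 hj).2
    · intro i hi j hj hij
      have hi' := hposle i (Finset.mem_filter.1 hi).1
      have hj' := hposle j (Finset.mem_filter.1 hj).1
      have := path_getVert_inj Q hQpath (a₀ + 2*i) (a₀ + 2*j) (by omega) (by omega) hij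
      omega
  have hJ2card : J2.card ≤ BadY.card := by
    apply Finset.card_le_card_of_injOn (fun j => Q.getVert (a₀ + 2*j + D))
    · intro j hj
      exact (Finset.mem_filter.1 hj).2
    · intro i hi j hj hij
      have hi' := hposle i (Finset.mem_filter.1 hi).1
      have hj' := hposle j (Finset.mem_filter.1 hj).1
      have := path_getVert_inj Q hQpath (a₀ + 2*i + D) (a₀ + 2*j + D) (by omega) (by omega) hij
      omega
  have hgood : ∃ j ∈ slots, j ∉ J1 ∧ j ∉ J2 := by
    have hcard : (J1 ∪ J2).card < slots.card := by
      have h1 := Finset.card_union_le J1 J2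
      have h2 : slots.card = 2*m - 1 := by rw [hslotsdef, Finset.card_range]
      omega
    have : (slots \ (J1 ∪ J2)).Nonempty := by
      rw [← Finset.card_pos]
      have hsub : J1 ∪ J2 ⊆ slots := Finset.union_subset (Finset.filter_subset _ _)
        (Finset.filter_subset _ _)
      have := Finset.card_sdiff_of_subset hsub
      omega
    obtain ⟨j, hjmem⟩ := this
    rw [Finset.mem_sdiff, Finset.mem_union] at hjmem
    exact ⟨j, hjmem.1, fun h => hjmem.2 (Or.inl h), fun h => hjmem.2 (Or.inr h)⟩
  obtain ⟨j, hjslots, hjn1, hjn2⟩ := hgood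
  set pa := a₀ + 2*j with hpadef
  set pb := pa + D with hpbdef
  have hpaD : pb ≤ Q.length := hposle j hjslots
  have hva2 : Q.getVert pa ∈ V2 := getVert_side_even hbip Q ha₀ j (by omega)
  have hvb2 : Q.getVert pb ∈ V2 := by
    have : pb = a₀ + 2*(j + e) := by omega
    rw [this]
    exact getVert_side_even hbip Q ha₀ (j + e) (by omega)
  have hvaX : ∃ xx ∈ X, G.Adj xx (Q.getVert pa) := by
    by_contra hcon
    push_neg at hcon
    apply hjn1
    rw [hJ1def, Finset.mem_filter]
    exact ⟨hjslots, by rw [hBadXdef, Finset.mem_filter]; exact ⟨hva2, hcon⟩⟩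
  have hvbY : ∃ yy ∈ Y, G.Adj yy (Q.getVert pb) := by
    by_contra hcon
    push_neg at hcon
    apply hjn2
    rw [hJ2def, Finset.mem_filter]
    exact ⟨hjslots, by rw [hBadYdef, Finset.mem_filter]; exact ⟨hvb2, hcon⟩⟩
  obtain ⟨xst, hxstX, hxadj⟩ := hvaX
  obtain ⟨yst, hystY, hyadj⟩ := hvbY
  -- middle path
  obtain ⟨wd, hwdlen, hwdgv, hwdsupp, hwdpath⟩ := exists_drop Q pa (by omega)
  obtain ⟨wq0, hwqlen, hwqsupp, hwqpath⟩ := exists_take wd D (by omega)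
  have hwdD : wd.getVert D = Q.getVert pb := by rw [hwdgv D, hpbdef]
  set wq := wq0.copy rfl hwdD with hwqdef
  have hwqlen' : wq.length = D := by rw [hwqdef, SimpleGraph.Walk.length_copy]; exact hwqlen
  have hwqsupp' : ∀ x ∈ wq.support, x ∈ Q.support := by
    intro x hx
    rw [hwqdef, SimpleGraph.Walk.support_copy] at hx
    exact hwdsupp x (hwqsupp x hx)
  have hwqpath' : wq.IsPath := by
    rw [hwqdef, SimpleGraph.Walk.isPath_copy]
    exact hwqpath (hwdpath hQpath)
  -- branches
  obtain ⟨w1, hw1path, hw1len, hw1supp⟩ := branch_exists hA0 t₁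
    (fun i hi => (hchain i (by omega)).1)
    (fun i hi jj hjj hij => ((hdisj i (by omega) jj (by omega)).1 hij).1)
    xst hxstX
  obtain ⟨w2, hw2path, hw2len, hw2supp⟩ := branch_exists hB0 t₂
    (fun i hi => (hchain i (by omega)).2)
    (fun i hi jj hjj hij => ((hdisj i (by omega) jj (by omega)).1 hij).2)
    yst hystY
  -- region facts
  have hQnotW : ∀ v ∈ Q.support, v ∉ W1 ∧ v ∉ W2 := by
    intro v hv
    have := hQR v hv
    rw [hRdef, Finset.mem_sdiff, hWbdef] at this
    constructor
    · exact fun h => this.2 (Finset.mem_union_left _ h)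
    · exact fun h => this.2 (Finset.mem_union_right _ h)
  have hw1W1 : ∀ v ∈ w1.support, v ∈ W1 := by
    intro v hv
    obtain ⟨jj, hjj, hvj⟩ := hw1supp v hv
    rw [hW1def]
    exact Finset.mem_biUnion.2 ⟨jj, Finset.mem_range.2 (by omega), hvj⟩
  have hw2W2 : ∀ v ∈ w2.support, v ∈ W2 := by
    intro v hv
    obtain ⟨jj, hjj, hvj⟩ := hw2supp v hv
    rw [hW2def]
    exact Finset.mem_biUnion.2 ⟨jj, Finset.mem_range.2 (by omega), hvj⟩
  have hW1W2 : ∀ v, v ∈ W1 → v ∈ W2 → False := by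
    intro v hv1 hv2
    rw [hW1def] at hv1
    rw [hW2def] at hv2
    obtain ⟨i, hi, hvi⟩ := Finset.mem_biUnion.1 hv1
    obtain ⟨jj, hjj, hvj⟩ := Finset.mem_biUnion.1 hv2
    exact (Finset.disjoint_left.1
      (hdisj i (by simp only [Finset.mem_range] at hi; omega)
        jj (by simp only [Finset.mem_range] at hjj; omega)).2) hvi hvj
  have hxstW1 : xst ∈ W1 := by
    rw [hW1def]
    exact Finset.mem_biUnion.2 ⟨t₁, Finset.mem_range.2 (by omega), hxstX⟩
  have hystW2 : yst ∈ W2 := by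
    rw [hW2def]
    exact Finset.mem_biUnion.2 ⟨t₂, Finset.mem_range.2 (by omega), hystY⟩
  -- assemble
  set w2r := w2.reverse with hw2rdef
  have hw2rpath : w2r.IsPath := hw2path.reverse
  have hw2rsupp : ∀ v ∈ w2r.support, v ∈ W2 := by
    intro v hv
    rw [hw2rdef, SimpleGraph.Walk.support_reverse, List.mem_reverse] at hv
    exact hw2W2 v hv
  have hvbW : Q.getVert pb ∉ w2r.support := by
    intro hmem
    exact (hQnotW _ (SimpleGraph.Walk.mem_support_iff_exists_getVert.2
      ⟨pb, rfl, by omega⟩)).2 (hw2rsupp _ hmem)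
  set c1 : G.Walk (Q.getVert pb) s₂ := SimpleGraph.Walk.cons hyadj.symm w2r with hc1def
  have hc1path : c1.IsPath := (SimpleGraph.Walk.cons_isPath_iff _ _).2 ⟨hw2rpath, hvbW⟩
  set c2 : G.Walk (Q.getVert pa) s₂ := wq.append c1 with hc2def
  have hc2path : c2.IsPath := by
    apply isPath_append_mid hwqpath' hc1path
    intro v hv hvq
    rw [hc1def, SimpleGraph.Walk.support_cons, List.mem_cons] at hvq
    rcases hvq with rfl | hvq
    · rfl
    · exfalso
      exact (hQnotW v (hwqsupp' v hv)).2 (hw2rsupp v hvq)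
  have hxstc2 : xst ∉ c2.support := by
    intro hmem
    rw [hc2def, SimpleGraph.Walk.mem_support_append_iff] at hmem
    rcases hmem with hmem | hmem
    · exact (hQnotW xst (hwqsupp' xst hmem)).1 hxstW1
    · rw [hc1def, SimpleGraph.Walk.support_cons, List.mem_cons] at hmem
      rcases hmem with heq | hmem
      · exact (hQnotW _ (SimpleGraph.Walk.mem_support_iff_exists_getVert.2
          ⟨pb, rfl, by omega⟩)).1 (heq ▸ hxstW1)
      · exact hW1W2 xst hxstW1 (hw2rsupp xst hmem)
  set c3 : G.Walk xst s₂ := SimpleGraph.Walk.cons hxadj c2 with hc3def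
  have hc3path : c3.IsPath := (SimpleGraph.Walk.cons_isPath_iff _ _).2 ⟨hc2path, hxstc2⟩
  have hfinalpath : (w1.append c3).IsPath := by
    apply isPath_append_mid hw1path hc3path
    intro v hv hvq
    rw [hc3def, SimpleGraph.Walk.support_cons, List.mem_cons] at hvq
    rcases hvq with rfl | hvq
    · rfl
    · exfalso
      have hvW1 := hw1W1 v hv
      rw [hc2def, SimpleGraph.Walk.mem_support_append_iff] at hvq
      rcases hvq with hvq | hvq
      · exact (hQnotW v (hwqsupp' v hvq)).1 hvW1
      · rw [hc1def, SimpleGraph.Walk.support_cons, List.mem_cons] at hvq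
        rcases hvq with heq | hvq
        · exact (hQnotW _ (SimpleGraph.Walk.mem_support_iff_exists_getVert.2
            ⟨pb, rfl, by omega⟩)).1 (heq ▸ hvW1)
        · exact hW1W2 v hvW1 (hw2rsupp v hvq)
  refine ⟨w1.append c3, hfinalpath, ?_⟩
  rw [SimpleGraph.Walk.length_append, hw1len, hc3def, SimpleGraph.Walk.length_cons,
    hc2def, SimpleGraph.Walk.length_append, hwqlen', hc1def, SimpleGraph.Walk.length_cons,
    hw2rdef, SimpleGraph.Walk.length_reverse, hw2len]
  omega
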